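/- For any real λ ≠ 0, there are uncountably many real numbers α > 1 such that the sequence (λα^n) is not uniformly distributed modulo 1. -/

import Mathlib

open Filter

/-- A sequence of real numbers is uniformly distributed modulo 1 (Weyl's criterion). -/
def UDMod1 (x : ℕ → ℝ) : Prop :=
  ∀ h : ℤ, h ≠ 0 →
    Tendsto (fun N : ℕ => (N : ℂ)⁻¹ * ∑ n ∈ Finset.Icc 1 N,
      Complex.exp (2 * Real.pi * Complex.I * h * x n)) atTop (nhds 0)

noncomputable def BD.nthA (μ : ℝ) (m : ℤ) (k : ℕ) : ℝ :=
  (((m : ℝ) + 1/8) / μ) ^ (((k : ℝ) + 1))⁻¹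

noncomputable def BD.nthB (μ : ℝ) (m : ℤ) (k : ℕ) : ℝ :=
  (((m : ℝ) + 3/8) / μ) ^ (((k : ℝ) + 1))⁻¹

noncomputable def BD.mseq (μ : ℝ) (u : ℕ → Bool) : ℕ → ℤ
  | 0 => ⌈12 * μ⌉
  | k + 1 => ⌈μ * (BD.nthA μ (BD.mseq μ u k) k) ^ (k + 2)⌉ + (if u k then 1 else 0)

namespace BD

variable {μ : ℝ}

noncomputable def A (μ : ℝ) (u : ℕ → Bool) (k : ℕ) : ℝ := nthA μ (mseq μ u k) k
noncomputable def B (μ : ℝ) (u : ℕ → Bool) (k : ℕ) : ℝ := nthB μ (mseq μ u k) k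

lemma rpow_pow {c : ℝ} (hc : 0 ≤ c) (k : ℕ) : (c ^ (((k : ℝ) + 1))⁻¹) ^ (k + 1) = c := by
  have h : ((k : ℝ) + 1) = ((k + 1 : ℕ) : ℝ) := by push_cast; ring
  rw [h]
  exact Real.rpow_inv_natCast_pow hc (Nat.succ_ne_zero k)

lemma nthA_pos (hμ : 0 < μ) {m : ℤ} (hm : 1 ≤ m) (k : ℕ) : 0 < nthA μ m k := by
  apply Real.rpow_pos_of_pos
  apply div_pos _ hμ
  have : (1 : ℝ) ≤ (m : ℝ) := by exact_mod_cast hm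
  linarith

lemma nthB_pos (hμ : 0 < μ) {m : ℤ} (hm : 1 ≤ m) (k : ℕ) : 0 < nthB μ m k := by
  apply Real.rpow_pos_of_pos
  apply div_pos _ hμ
  have : (1 : ℝ) ≤ (m : ℝ) := by exact_mod_cast hm
  linarith

lemma pow_nthA (hμ : 0 < μ) {m : ℤ} (hm : 1 ≤ m) (k : ℕ) :
    μ * (nthA μ m k) ^ (k + 1) = (m : ℝ) + 1/8 := by
  have h1 : (1 : ℝ) ≤ (m : ℝ) := by exact_mod_cast hm
  have hc : 0 ≤ ((m : ℝ) + 1/8) / μ := by positivity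
  rw [nthA, rpow_pow hc k]
  field_simp

lemma pow_nthB (hμ : 0 < μ) {m : ℤ} (hm : 1 ≤ m) (k : ℕ) :
    μ * (nthB μ m k) ^ (k + 1) = (m : ℝ) + 3/8 := by
  have h1 : (1 : ℝ) ≤ (m : ℝ) := by exact_mod_cast hm
  have hc : 0 ≤ ((m : ℝ) + 3/8) / μ := by positivity
  rw [nthB, rpow_pow hc k]
  field_simp

lemma bit_nonneg (b : Bool) : (0 : ℤ) ≤ (if b then 1 else 0) := by cases b <;> simp

lemma bit_le_one (b : Bool) : (if b then 1 else 0 : ℤ) ≤ 1 := by cases b <;> simp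

/-- Basic facts, by induction. -/
lemma basic (hμ : 0 < μ) (u : ℕ → Bool) : ∀ k, 1 ≤ mseq μ u k ∧ 12 ≤ A μ u k := by
  intro k
  induction k with
  | zero =>
    have hm : (1 : ℤ) ≤ ⌈12 * μ⌉ := Int.ceil_pos.mpr (by positivity)
    have hm0 : mseq μ u 0 = ⌈12 * μ⌉ := rfl
    refine ⟨hm0 ▸ hm, ?_⟩
    have hm' : 12 * μ ≤ (⌈12 * μ⌉ : ℝ) := Int.le_ceil _
    have hpow : μ * A μ u 0 ^ (0 + 1) = ((mseq μ u 0 : ℝ)) + 1/8 :=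
      pow_nthA hμ (hm0 ▸ hm) 0
    rw [hm0] at hpow
    simp only [pow_one, zero_add] at hpow
    nlinarith
  | succ k ih =>
    obtain ⟨ihm, ihA⟩ := ih
    have hA0 : 0 < A μ u k := nthA_pos hμ ihm k
    have hc : 0 < μ * (A μ u k) ^ (k + 2) := by positivity
    have hmk : mseq μ u (k+1) = ⌈μ * (A μ u k) ^ (k + 2)⌉ + (if u k then 1 else 0) := rfl
    have hm1 : 1 ≤ mseq μ u (k+1) := by
      rw [hmk]
      have := Int.ceil_pos.mpr hc
      have := bit_nonneg (u k)
      omega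
    refine ⟨hm1, ?_⟩
    have hA1 : 0 < A μ u (k+1) := nthA_pos hμ hm1 (k+1)
    have hpow : μ * A μ u (k+1) ^ (k + 2) = ((mseq μ u (k+1) : ℝ)) + 1/8 :=
      pow_nthA hμ hm1 (k+1)
    have hge : μ * (A μ u k) ^ (k + 2) ≤ ((mseq μ u (k+1) : ℝ)) := by
      have h1 := Int.le_ceil (μ * (A μ u k) ^ (k + 2))
      have h2 : ((0:ℤ) : ℝ) ≤ ((if u k then 1 else 0 : ℤ) : ℝ) := by
        exact_mod_cast bit_nonneg (u k)
      rw [hmk]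
      push_cast
      push_cast at h1 h2
      linarith
    by_contra hcon
    push_neg at hcon
    have hlt : A μ u (k+1) < A μ u k := lt_of_lt_of_le hcon ihA
    have hplt : A μ u (k+1) ^ (k+2) < A μ u k ^ (k+2) :=
      pow_lt_pow_left₀ hlt hA1.le (n := k + 2) (by omega)
    nlinarith [mul_lt_mul_of_pos_left hplt hμ]

lemma A_le_B (hμ : 0 < μ) (u : ℕ → Bool) (k : ℕ) : A μ u k ≤ B μ u k := by
  obtain ⟨hm, _⟩ := basic hμ u k
  have hA : μ * A μ u k ^ (k + 1) = ((mseq μ u k : ℝ)) + 1/8 := pow_nthA hμ hm k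
  have hB : μ * B μ u k ^ (k + 1) = ((mseq μ u k : ℝ)) + 3/8 := pow_nthB hμ hm k
  have hB0 : 0 < B μ u k := nthB_pos hμ hm k
  by_contra hcon
  push_neg at hcon
  have hplt : B μ u k ^ (k+1) < A μ u k ^ (k+1) :=
    pow_lt_pow_left₀ hcon hB0.le (n := k + 1) (by omega)
  nlinarith [mul_lt_mul_of_pos_left hplt hμ]

lemma A_mono_succ (hμ : 0 < μ) (u : ℕ → Bool) (k : ℕ) : A μ u k ≤ A μ u (k+1) := by
  obtain ⟨ihm, ihA⟩ := basic hμ u k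
  obtain ⟨hm1, _⟩ := basic hμ u (k+1)
  have hA1 : 0 < A μ u (k+1) := nthA_pos hμ hm1 (k+1)
  have hpow : μ * A μ u (k+1) ^ (k + 2) = ((mseq μ u (k+1) : ℝ)) + 1/8 :=
    pow_nthA hμ hm1 (k+1)
  have hge : μ * (A μ u k) ^ (k + 2) ≤ ((mseq μ u (k+1) : ℝ)) := by
    have h1 := Int.le_ceil (μ * (A μ u k) ^ (k + 2))
    have h2 : ((0:ℤ) : ℝ) ≤ ((if u k then 1 else 0 : ℤ) : ℝ) := by
      exact_mod_cast bit_nonneg (u k)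
    have hmk : mseq μ u (k+1) = ⌈μ * (A μ u k) ^ (k + 2)⌉ + (if u k then 1 else 0) := rfl
    rw [hmk]
    push_cast
    push_cast at h1 h2
    linarith
  by_contra hcon
  push_neg at hcon
  have hplt : A μ u (k+1) ^ (k+2) < A μ u k ^ (k+2) :=
    pow_lt_pow_left₀ hcon hA1.le (n := k + 2) (by omega)
  nlinarith [mul_lt_mul_of_pos_left hplt hμ]

lemma B_anti_succ (hμ : 0 < μ) (u : ℕ → Bool) (k : ℕ) : B μ u (k+1) ≤ B μ u k := by
  obtain ⟨ihm, ihA⟩ := basic hμ u k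
  obtain ⟨hm1, _⟩ := basic hμ u (k+1)
  have hAB := A_le_B hμ u k
  have hA : μ * A μ u k ^ (k + 1) = ((mseq μ u k : ℝ)) + 1/8 := pow_nthA hμ ihm k
  have hB : μ * B μ u k ^ (k + 1) = ((mseq μ u k : ℝ)) + 3/8 := pow_nthB hμ ihm k
  have hB1 : 0 < B μ u (k+1) := nthB_pos hμ hm1 (k+1)
  have hB0 : 0 < B μ u k := nthB_pos hμ ihm k
  have hA0 : 0 < A μ u k := nthA_pos hμ ihm k
  have hmr : (1:ℝ) ≤ ((mseq μ u k : ℝ)) := by exact_mod_cast ihm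
  have hpowB1 : μ * B μ u (k+1) ^ (k + 2) = ((mseq μ u (k+1) : ℝ)) + 3/8 :=
    pow_nthB hμ hm1 (k+1)
  have hle : ((mseq μ u (k+1) : ℝ)) ≤ μ * (A μ u k) ^ (k + 2) + 2 := by
    have h1 := (Int.ceil_lt_add_one (μ * (A μ u k) ^ (k + 2))).le
    have h2 : ((if u k then 1 else 0 : ℤ) : ℝ) ≤ 1 := by
      exact_mod_cast bit_le_one (u k)
    have hmk : mseq μ u (k+1) = ⌈μ * (A μ u k) ^ (k + 2)⌉ + (if u k then 1 else 0) := rfl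
    rw [hmk]
    push_cast
    push_cast at h1 h2
    linarith
  have hApow : μ * (A μ u k) ^ (k + 2) = (((mseq μ u k : ℝ)) + 1/8) * A μ u k := by
    rw [show k + 2 = (k+1) + 1 from rfl, pow_succ, ← mul_assoc, hA]
  have hBpow : μ * (B μ u k) ^ (k + 2) = (((mseq μ u k : ℝ)) + 3/8) * B μ u k := by
    rw [show k + 2 = (k+1) + 1 from rfl, pow_succ, ← mul_assoc, hB]
  have hgap : μ * (A μ u k) ^ (k + 2) + 3 ≤ μ * (B μ u k) ^ (k + 2) := by
    rw [hApow, hBpow]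
    nlinarith [mul_nonneg (sub_nonneg.mpr hAB)
      (by linarith : (0:ℝ) ≤ ((mseq μ u k : ℝ)) + 3/8)]
  by_contra hcon
  push_neg at hcon
  have hplt : B μ u k ^ (k+2) < B μ u (k+1) ^ (k+2) :=
    pow_lt_pow_left₀ hcon hB0.le (n := k + 2) (by omega)
  nlinarith [mul_lt_mul_of_pos_left hplt hμ]

lemma A_mono (hμ : 0 < μ) (u : ℕ → Bool) : Monotone (A μ u) :=
  monotone_nat_of_le_succ (A_mono_succ hμ u)

lemma B_anti (hμ : 0 < μ) (u : ℕ → Bool) : Antitone (B μ u) :=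
  antitone_nat_of_succ_le (B_anti_succ hμ u)

noncomputable def alpha (μ : ℝ) (u : ℕ → Bool) : ℝ := ⨆ k, A μ u k

lemma A_le_B' (hμ : 0 < μ) (u : ℕ → Bool) (j k : ℕ) : A μ u j ≤ B μ u k :=
  calc A μ u j ≤ A μ u (max j k) := A_mono hμ u (le_max_left j k)
    _ ≤ B μ u (max j k) := A_le_B hμ u (max j k)
    _ ≤ B μ u k := B_anti hμ u (le_max_right j k)

lemma bddA (hμ : 0 < μ) (u : ℕ → Bool) : BddAbove (Set.range (A μ u)) :=
  ⟨B μ u 0, by rintro x ⟨j, rfl⟩; exact A_le_B' hμ u j 0⟩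

lemma A_le_alpha (hμ : 0 < μ) (u : ℕ → Bool) (k : ℕ) : A μ u k ≤ alpha μ u :=
  le_ciSup (bddA hμ u) k

lemma alpha_le_B (hμ : 0 < μ) (u : ℕ → Bool) (k : ℕ) : alpha μ u ≤ B μ u k :=
  ciSup_le fun j => A_le_B' hμ u j k

lemma alpha_ge (hμ : 0 < μ) (u : ℕ → Bool) : 12 ≤ alpha μ u :=
  le_trans (basic hμ u 0).2 (A_le_alpha hμ u 0)

lemma alpha_pow_mem (hμ : 0 < μ) (u : ℕ → Bool) (k : ℕ) :
    ((mseq μ u k : ℝ)) + 1/8 ≤ μ * (alpha μ u) ^ (k+1) ∧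
      μ * (alpha μ u) ^ (k+1) ≤ ((mseq μ u k : ℝ)) + 3/8 := by
  obtain ⟨hm, h12⟩ := basic hμ u k
  have hA0 : 0 < A μ u k := nthA_pos hμ hm k
  have h1 := pow_le_pow_left₀ hA0.le (A_le_alpha hμ u k) (k+1)
  have halpha0 : (0:ℝ) ≤ alpha μ u := le_trans (by norm_num) (alpha_ge hμ u)
  have h2 := pow_le_pow_left₀ halpha0 (alpha_le_B hμ u k) (k+1)
  have hA : μ * A μ u k ^ (k + 1) = ((mseq μ u k : ℝ)) + 1/8 := pow_nthA hμ hm k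
  have hB : μ * B μ u k ^ (k + 1) = ((mseq μ u k : ℝ)) + 3/8 := pow_nthB hμ hm k
  constructor
  · nlinarith [mul_le_mul_of_nonneg_left h1 hμ.le]
  · nlinarith [mul_le_mul_of_nonneg_left h2 hμ.le]

lemma sin_ge {t : ℝ} (m : ℤ) (h1 : (m:ℝ) + 1/8 ≤ t) (h2 : t ≤ (m:ℝ) + 3/8) :
    Real.sqrt 2 / 2 ≤ Real.sin (2 * Real.pi * t) := by
  have hπ := Real.pi_pos
  have hrw : 2 * Real.pi * t = 2 * Real.pi * (t - m) + m * (2 * Real.pi) := by ring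
  rw [hrw, Real.sin_add_int_mul_two_pi]
  set s := t - (m:ℝ) with hs
  have hs1 : 1/8 ≤ s := by rw [hs]; linarith
  have hs2 : s ≤ 3/8 := by rw [hs]; linarith
  have hsin : Real.sin (2 * Real.pi * s) = Real.cos (Real.pi/2 - 2 * Real.pi * s) :=
    (Real.cos_pi_div_two_sub _).symm
  rw [hsin, ← Real.cos_abs, ← Real.cos_pi_div_four]
  apply Real.cos_le_cos_of_nonneg_of_le_pi (abs_nonneg _) (by linarith)
  rw [abs_le]
  constructor <;> nlinarith

/-- The constructed α gives a non uniformly distributed sequence. -/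
lemma not_ud (lam : ℝ) (hlam : lam ≠ 0) (u : ℕ → Bool) :
    ¬ UDMod1 (fun n => lam * (alpha |lam| u) ^ n) := by
  intro hUD
  set μ := |lam| with hμdef
  have hμ : 0 < μ := abs_pos.mpr hlam
  set α := alpha μ u with hα
  set h : ℤ := if 0 < lam then 1 else -1 with hh
  have hh0 : h ≠ 0 := by rw [hh]; split <;> simp
  have hhl : (h : ℝ) * lam = μ := by
    by_cases hp : 0 < lam
    · simp [hh, hp, hμdef, abs_of_pos hp]
    · have hneg : lam < 0 := lt_of_le_of_ne (not_lt.mp hp) hlam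
      simp [hh, hp, hμdef, abs_of_neg hneg]
  have ht := hUD h hh0
  set c := Real.sqrt 2 / 2 with hc
  have hcpos : 0 < c := by rw [hc]; positivity
  obtain ⟨N₀, hN₀⟩ := Metric.tendsto_atTop.mp ht c hcpos
  set N := max N₀ 1 with hN
  have h1N : 1 ≤ N := le_max_right _ _
  have hlt : ‖(N : ℂ)⁻¹ * ∑ n ∈ Finset.Icc 1 N,
      Complex.exp (2 * Real.pi * Complex.I * h * ((lam * α ^ n : ℝ) : ℂ))‖ < c := by
    have h' := hN₀ N (le_max_left _ _)
    rw [dist_zero_right] at h'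
    exact h'
  set S := (N : ℂ)⁻¹ * ∑ n ∈ Finset.Icc 1 N,
      Complex.exp (2 * Real.pi * Complex.I * h * ((lam * α ^ n : ℝ) : ℂ)) with hSdef
  have hterm : ∀ n ∈ Finset.Icc 1 N,
      c ≤ (Complex.exp (2 * Real.pi * Complex.I * h * ((lam * α ^ n : ℝ) : ℂ))).im := by
    intro n hn
    rw [Finset.mem_Icc] at hn
    obtain ⟨hn1, _⟩ := hn
    have hrw : (2 * (Real.pi:ℂ) * Complex.I * (h:ℂ) * ((lam * α ^ n : ℝ) : ℂ))
        = ((2 * Real.pi * (μ * α ^ n) : ℝ) : ℂ) * Complex.I := by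
      have hcast : (h : ℂ) * (lam : ℂ) = (μ : ℂ) := by exact_mod_cast hhl
      push_cast
      linear_combination (2 * (Real.pi:ℂ) * Complex.I * (α:ℂ)^n) * hcast
    rw [hrw, Complex.exp_ofReal_mul_I_im]
    obtain ⟨k, rfl⟩ : ∃ k, n = k + 1 := ⟨n - 1, by omega⟩
    obtain ⟨hl, hr⟩ := alpha_pow_mem hμ u k
    rw [hc, show 2 * Real.pi * (μ * α ^ (k+1)) = 2 * Real.pi * (μ * α ^ (k+1)) from rfl]
    exact sin_ge (mseq μ u k) hl hr
  have hNR : (0:ℝ) < (N : ℝ) := by exact_mod_cast Nat.lt_of_lt_of_le Nat.zero_lt_one h1N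
  have himS : c ≤ S.im := by
    have hco : ((N : ℂ))⁻¹ = (((N : ℝ)⁻¹ : ℝ) : ℂ) := by push_cast; ring
    rw [hSdef, hco, Complex.im_ofReal_mul, Complex.im_sum]
    have hsum : (N:ℝ) * c ≤ ∑ n ∈ Finset.Icc 1 N,
        (Complex.exp (2 * Real.pi * Complex.I * (h:ℂ) * ((lam * α ^ n : ℝ) : ℂ))).im := by
      calc (N:ℝ) * c = ∑ _n ∈ Finset.Icc 1 N, c := by
            rw [Finset.sum_const, Nat.card_Icc, nsmul_eq_mul]
            norm_num
        _ ≤ _ := Finset.sum_le_sum hterm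
    calc c = (N:ℝ)⁻¹ * ((N:ℝ) * c) := by field_simp
      _ ≤ _ := mul_le_mul_of_nonneg_left hsum (by positivity)
  have habs : S.im ≤ ‖S‖ := le_trans (le_abs_self _) (Complex.abs_im_le_norm S)
  have : ‖S‖ < c := hlt
  linarith

lemma mseq_eq (hμ : 0 < μ) {u v : ℕ → Bool} (h : alpha μ u = alpha μ v) (k : ℕ) :
    mseq μ u k = mseq μ v k := by
  obtain ⟨h1u, h2u⟩ := alpha_pow_mem hμ u k
  obtain ⟨h1v, h2v⟩ := alpha_pow_mem hμ v k
  rw [h] at h1u h2u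
  have e1 : ((mseq μ u k : ℝ)) < ((mseq μ v k : ℝ)) + 1 := by linarith
  have e2 : ((mseq μ v k : ℝ)) < ((mseq μ u k : ℝ)) + 1 := by linarith
  have i1 : mseq μ u k < mseq μ v k + 1 := by exact_mod_cast e1
  have i2 : mseq μ v k < mseq μ u k + 1 := by exact_mod_cast e2
  omega

lemma alpha_inj (hμ : 0 < μ) : Function.Injective (alpha μ) := by
  intro u v h
  funext k
  have h1 : mseq μ u (k+1) = mseq μ v (k+1) := mseq_eq hμ h (k+1)
  have h0 : mseq μ u k = mseq μ v k := mseq_eq hμ h k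
  have h1' : (⌈μ * (nthA μ (mseq μ u k) k) ^ (k + 2)⌉ + (if u k then 1 else 0) : ℤ)
      = ⌈μ * (nthA μ (mseq μ v k) k) ^ (k + 2)⌉ + (if v k then 1 else 0) := h1
  rw [h0] at h1'
  have hb : (if u k then 1 else 0 : ℤ) = (if v k then 1 else 0) := by omega
  cases hu : u k <;> cases hv : v k <;> simp [hu, hv] at hb ⊢

end BD

theorem uncountably_many_badly_distributed (lam : ℝ) (hlam : lam ≠ 0) :
    ¬ {α : ℝ | 1 < α ∧ ¬ UDMod1 (fun n => lam * α ^ n)}.Countable := by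
  intro hS
  have hμ : 0 < |lam| := abs_pos.mpr hlam
  have hmem : ∀ u : ℕ → Bool,
      BD.alpha |lam| u ∈ {α : ℝ | 1 < α ∧ ¬ UDMod1 (fun n => lam * α ^ n)} := by
    intro u
    refine ⟨by linarith [BD.alpha_ge hμ u], BD.not_ud lam hlam u⟩
  have hrange : (Set.range (BD.alpha |lam|)).Countable :=
    hS.mono (Set.range_subset_iff.mpr hmem)
  have hcnt : Countable (ℕ → Bool) := by
    haveI := hrange.to_subtype
    exact Function.Injective.countable
      (f := fun u : ℕ → Bool => (⟨BD.alpha |lam| u, Set.mem_range_self u⟩ :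
        Set.range (BD.alpha |lam|)))
      (fun u v huv => BD.alpha_inj hμ (congrArg Subtype.val huv))
  have hSetN : Countable (Set ℕ) :=
    Countable.of_equiv (ℕ → Bool)
      (Equiv.arrowCongr (Equiv.refl ℕ) Equiv.propEquivBool.symm)
  obtain ⟨g, hg⟩ := Countable.exists_injective_nat (Set ℕ)
  exact Function.cantor_injective g hg
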